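/- Let K, T, B > 0. There is a constant β depending only on K, T, B with the following property. Let C : ℝ → ℝ³ be a C⁴ curve parametrized by arclength with C(0) = 0, |C''| ≤ K, |C'''| ≤ T, |C⁗| ≤ B, let x > 0 with K·x ≤ 2/5, let 0 < s₁ ≤ 1.01·x with C'(0) × C'(s₁) ≠ 0, and set p = C(s₁)/|C(s₁)| (the unit chord direction of the edge from C(0) to C(s₁)). Then the spherical area of the region bounded by the tantrix arc {C'(t) : t ∈ [0, s₁]} and the great-circle arcs joining p to C'(0) and to C'(s₁), expressed by the Fuller ribbon integral, satisfies | ∫₀^{s₁} ((C'(t) × p)/(1 + C'(t)·p)) · C''(t) dt | ≤ K·T·x³ + β·x⁴. -/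

import Mathlib

set_option maxHeartbeats 2000000

noncomputable section

/-- Cross product on `ℝ³`. -/
def cross3 (v w : EuclideanSpace ℝ (Fin 3)) : EuclideanSpace ℝ (Fin 3) :=
  WithLp.toLp 2 ![v 1 * w 2 - v 2 * w 1, v 2 * w 0 - v 0 * w 2, v 0 * w 1 - v 1 * w 0]

/-- Euclidean inner product on `ℝ³`. -/
def dot3 (v w : EuclideanSpace ℝ (Fin 3)) : ℝ := inner ℝ v w

namespace RibbonAux

open Set

abbrev E3 := EuclideanSpace ℝ (Fin 3)

lemma dot3_eq (v w : E3) : dot3 v w = v 0 * w 0 + v 1 * w 1 + v 2 * w 2 := by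
  simp [dot3, PiLp.inner_apply, RCLike.inner_apply, Fin.sum_univ_three, mul_comm]

def D3 (u v w : E3) : ℝ := dot3 (cross3 u v) w

lemma D3_eq (u v w : E3) : D3 u v w =
    (u 1 * v 2 - u 2 * v 1) * w 0 + (u 2 * v 0 - u 0 * v 2) * w 1 +
    (u 0 * v 1 - u 1 * v 0) * w 2 := by
  simp [D3, dot3_eq, cross3]

lemma D3_decomp (u u₂ p₂ w w₂ : E3) :
    D3 u p₂ w = D3 u₂ p₂ w₂ + D3 u₂ (p₂ - u₂) (w - w₂) + D3 (u - u₂) p₂ w := by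
  simp only [D3_eq, PiLp.sub_apply]; ring

lemma D3_smul₂ (α β' : ℝ) (u v z w : E3) :
    D3 u (α • v + β' • z) w = α * D3 u v w + β' * D3 u z w := by
  simp only [D3_eq, PiLp.add_apply, PiLp.smul_apply, smul_eq_mul]; ring

lemma D3_main (t₀ a c : E3) (x₁ x₂ y₁ y₂ z : ℝ) :
    D3 (t₀ + x₁ • a + x₂ • c) (t₀ + y₁ • a + y₂ • c) (a + z • c)
      = (y₁*z - y₂ - x₁*z + x₂) * D3 t₀ a c := by
  simp only [D3_eq, PiLp.add_apply, PiLp.smul_apply, smul_eq_mul]; ring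

lemma norm_sq_eq (v : E3) : ‖v‖^2 = v 0^2 + v 1^2 + v 2^2 := by
  rw [EuclideanSpace.norm_eq, Real.sq_sqrt (by positivity)]
  simp [Fin.sum_univ_three, Real.norm_eq_abs, sq_abs]

lemma D3_le (u v w : E3) : |D3 u v w| ≤ ‖u‖ * ‖v‖ * ‖w‖ := by
  have h1 : |D3 u v w| ≤ ‖cross3 u v‖ * ‖w‖ := by
    have := abs_real_inner_le_norm (cross3 u v) w
    simpa [D3, dot3] using this
  refine h1.trans (mul_le_mul_of_nonneg_right ?_ (norm_nonneg w))
  have h2 : ‖cross3 u v‖^2 ≤ (‖u‖ * ‖v‖)^2 := by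
    have hl : ‖cross3 u v‖^2 = ‖u‖^2 * ‖v‖^2 - (dot3 u v)^2 := by
      simp only [norm_sq_eq, dot3_eq, cross3]
      simp [Fin.isValue]; ring
    nlinarith [sq_nonneg (dot3 u v), norm_sq_eq u, norm_sq_eq v]
  exact le_of_pow_le_pow_left₀ two_ne_zero (by positivity) h2

section mvt
variable {E : Type*} [NormedAddCommGroup E] [NormedSpace ℝ E]

lemma mvt_bound {g g' : ℝ → E} {b M : ℝ} (hb : 0 ≤ b)
    (hd : ∀ u ∈ Icc (0:ℝ) b, HasDerivAt g (g' u) u)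
    (hM : ∀ u ∈ Icc (0:ℝ) b, ‖g' u‖ ≤ M) :
    ‖g b - g 0‖ ≤ M * b := by
  have := norm_image_sub_le_of_norm_deriv_le_segment'
    (f := g) (f' := g') (a := 0) (b := b)
    (fun u hu => (hd u hu).hasDerivWithinAt)
    (fun u hu => hM u (Ico_subset_Icc_self hu)) b (right_mem_Icc.2 hb)
  simpa using this

variable {C : ℝ → E} {K T B : ℝ}
variable (hC : ContDiff ℝ 4 C)
variable (hK2 : ∀ s : ℝ, ‖iteratedDeriv 2 C s‖ ≤ K)
variable (hT3 : ∀ s : ℝ, ‖iteratedDeriv 3 C s‖ ≤ T)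
variable (hB4 : ∀ s : ℝ, ‖iteratedDeriv 4 C s‖ ≤ B)

include hC in
lemma hdn (n : ℕ) (hn : n < 4) (u : ℝ) :
    HasDerivAt (iteratedDeriv n C) (iteratedDeriv (n+1) C u) u := by
  have h1 : Differentiable ℝ (iteratedDeriv n C) :=
    hC.differentiable_iteratedDeriv n (by exact_mod_cast hn)
  rw [iteratedDeriv_succ]; exact (h1 u).hasDerivAt

include hC in
lemma hd1 (u : ℝ) : HasDerivAt C (deriv C u) u :=
  ((hC.differentiable (by norm_num)) u).hasDerivAt

include hC in
lemma hd2 (u : ℝ) : HasDerivAt (deriv C) (iteratedDeriv 2 C u) u := by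
  have := hdn hC 1 (by norm_num) u
  rwa [iteratedDeriv_one] at this

include hC in
lemma hd3 (u : ℝ) : HasDerivAt (iteratedDeriv 2 C) (iteratedDeriv 3 C u) u :=
  hdn hC 2 (by norm_num) u

include hC in
lemma hd4 (u : ℝ) : HasDerivAt (iteratedDeriv 3 C) (iteratedDeriv 4 C u) u :=
  hdn hC 3 (by norm_num) u

include hC hK2 in
lemma taylor1 {t : ℝ} (ht : 0 ≤ t) : ‖deriv C t - deriv C 0‖ ≤ K * t :=
  mvt_bound ht (fun u _ => hd2 hC u) (fun u _ => hK2 u)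

include hC hB4 in
lemma taylor2 {t : ℝ} (ht : 0 ≤ t) : ‖iteratedDeriv 3 C t - iteratedDeriv 3 C 0‖ ≤ B * t :=
  mvt_bound ht (fun u _ => hd4 hC u) (fun u _ => hB4 u)

omit hC in
include hB4 in
lemma Bnonneg : 0 ≤ B := (norm_nonneg _).trans (hB4 0)

omit hC in
include hK2 in
lemma Knonneg : 0 ≤ K := (norm_nonneg _).trans (hK2 0)

include hC hB4 in
lemma taylor3 {t : ℝ} (ht : 0 ≤ t) :
    ‖iteratedDeriv 2 C t - (iteratedDeriv 2 C 0 + t • iteratedDeriv 3 C 0)‖ ≤ B * t^2 := by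
  have hB0 : 0 ≤ B := Bnonneg hB4
  have key : ‖(iteratedDeriv 2 C t - t • iteratedDeriv 3 C 0) -
      (iteratedDeriv 2 C 0 - (0:ℝ) • iteratedDeriv 3 C 0)‖ ≤ (B*t) * t := by
    refine mvt_bound (g := fun u => iteratedDeriv 2 C u - u • iteratedDeriv 3 C 0)
      (g' := fun u => iteratedDeriv 3 C u - iteratedDeriv 3 C 0) ht ?_ ?_
    · intro u _
      have h := (hd3 hC u).sub ((hasDerivAt_id u).smul_const (iteratedDeriv 3 C 0))
      simp only [one_smul] at h; exact h
    · intro u hu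
      calc ‖iteratedDeriv 3 C u - iteratedDeriv 3 C 0‖ ≤ B * u := taylor2 hC hB4 hu.1
        _ ≤ B * t := mul_le_mul_of_nonneg_left hu.2 hB0
  have e : (iteratedDeriv 2 C t - t • iteratedDeriv 3 C 0) -
      (iteratedDeriv 2 C 0 - (0:ℝ) • iteratedDeriv 3 C 0)
      = iteratedDeriv 2 C t - (iteratedDeriv 2 C 0 + t • iteratedDeriv 3 C 0) := by
    rw [zero_smul]; abel
  rw [e] at key
  calc _ ≤ (B*t)*t := key
    _ = B * t^2 := by ring

include hC hB4 in
lemma taylor4 {t : ℝ} (ht : 0 ≤ t) :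
    ‖deriv C t - (deriv C 0 + t • iteratedDeriv 2 C 0 + (t^2/2) • iteratedDeriv 3 C 0)‖
      ≤ B * t^3 := by
  have hB0 : 0 ≤ B := Bnonneg hB4
  have key : ‖(deriv C t - t • iteratedDeriv 2 C 0 - (t^2/2) • iteratedDeriv 3 C 0) -
      (deriv C 0 - (0:ℝ) • iteratedDeriv 2 C 0 - ((0:ℝ)^2/2) • iteratedDeriv 3 C 0)‖
      ≤ (B*t^2) * t := by
    refine mvt_bound (g := fun u => deriv C u - u • iteratedDeriv 2 C 0
        - (u^2/2) • iteratedDeriv 3 C 0)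
      (g' := fun u => iteratedDeriv 2 C u - (iteratedDeriv 2 C 0 + u • iteratedDeriv 3 C 0)) ht ?_ ?_
    · intro u _
      have h := ((hd2 hC u).sub ((hasDerivAt_id u).smul_const (iteratedDeriv 2 C 0))).sub
        (((hasDerivAt_pow 2 u).div_const 2).smul_const (iteratedDeriv 3 C 0))
      have e2 : iteratedDeriv 2 C u - (1:ℝ) • iteratedDeriv 2 C 0
          - (((2:ℕ):ℝ) * u ^ (2-1) / 2) • iteratedDeriv 3 C 0
          = iteratedDeriv 2 C u - (iteratedDeriv 2 C 0 + u • iteratedDeriv 3 C 0) := by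
        norm_num; abel
      rw [e2] at h; exact h
    · intro u hu
      calc ‖_‖ ≤ B * u^2 := taylor3 hC hB4 hu.1
        _ ≤ B * t^2 := mul_le_mul_of_nonneg_left (pow_le_pow_left₀ hu.1 hu.2 2) hB0
  have e : (deriv C t - t • iteratedDeriv 2 C 0 - (t^2/2) • iteratedDeriv 3 C 0) -
      (deriv C 0 - (0:ℝ) • iteratedDeriv 2 C 0 - ((0:ℝ)^2/2) • iteratedDeriv 3 C 0)
      = deriv C t - (deriv C 0 + t • iteratedDeriv 2 C 0 + (t^2/2) • iteratedDeriv 3 C 0) := by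
    norm_num; abel
  rw [e] at key
  calc _ ≤ (B*t^2)*t := key
    _ = B * t^3 := by ring

include hC hB4 in
lemma taylor5 (hC0 : C 0 = 0) {t : ℝ} (ht : 0 ≤ t) :
    ‖C t - (t • deriv C 0 + (t^2/2) • iteratedDeriv 2 C 0 + (t^3/6) • iteratedDeriv 3 C 0)‖
      ≤ B * t^4 := by
  have hB0 : 0 ≤ B := Bnonneg hB4
  have key : ‖(C t - t • deriv C 0 - (t^2/2) • iteratedDeriv 2 C 0
        - (t^3/6) • iteratedDeriv 3 C 0) -
      (C 0 - (0:ℝ) • deriv C 0 - ((0:ℝ)^2/2) • iteratedDeriv 2 C 0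
        - ((0:ℝ)^3/6) • iteratedDeriv 3 C 0)‖ ≤ (B*t^3) * t := by
    refine mvt_bound (g := fun u => C u - u • deriv C 0 - (u^2/2) • iteratedDeriv 2 C 0
        - (u^3/6) • iteratedDeriv 3 C 0)
      (g' := fun u => deriv C u - (deriv C 0 + u • iteratedDeriv 2 C 0
        + (u^2/2) • iteratedDeriv 3 C 0)) ht ?_ ?_
    · intro u _
      have h := (((hd1 hC u).sub ((hasDerivAt_id u).smul_const (deriv C 0))).sub
        (((hasDerivAt_pow 2 u).div_const 2).smul_const (iteratedDeriv 2 C 0))).sub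
        (((hasDerivAt_pow 3 u).div_const 6).smul_const (iteratedDeriv 3 C 0))
      have e2 : deriv C u - (1:ℝ) • deriv C 0 - (((2:ℕ):ℝ) * u ^ (2-1) / 2) • iteratedDeriv 2 C 0
          - (((3:ℕ):ℝ) * u ^ (3-1) / 6) • iteratedDeriv 3 C 0
          = deriv C u - (deriv C 0 + u • iteratedDeriv 2 C 0 + (u^2/2) • iteratedDeriv 3 C 0) := by
        norm_num
        rw [show ((3:ℝ) * u ^ 2 / 6) = u^2/2 by ring]
        abel
      rw [e2] at h; exact h
    · intro u hu
      calc ‖_‖ ≤ B * u^3 := taylor4 hC hB4 hu.1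
        _ ≤ B * t^3 := mul_le_mul_of_nonneg_left (pow_le_pow_left₀ hu.1 hu.2 3) hB0
  have e : (C t - t • deriv C 0 - (t^2/2) • iteratedDeriv 2 C 0 - (t^3/6) • iteratedDeriv 3 C 0) -
      (C 0 - (0:ℝ) • deriv C 0 - ((0:ℝ)^2/2) • iteratedDeriv 2 C 0
        - ((0:ℝ)^3/6) • iteratedDeriv 3 C 0)
      = C t - (t • deriv C 0 + (t^2/2) • iteratedDeriv 2 C 0 + (t^3/6) • iteratedDeriv 3 C 0)
        - C 0 := by
    norm_num; abel
  rw [e, hC0, sub_zero] at key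
  calc _ ≤ (B*t^3)*t := key
    _ = B * t^4 := by ring

include hC hK2 in
lemma taylor6 {t : ℝ} (ht : 0 ≤ t) : ‖C t - C 0 - t • deriv C 0‖ ≤ K * t^2 := by
  have hK0 : 0 ≤ K := Knonneg hK2
  have key : ‖(C t - t • deriv C 0) - (C 0 - (0:ℝ) • deriv C 0)‖ ≤ (K*t) * t := by
    refine mvt_bound (g := fun u => C u - u • deriv C 0)
      (g' := fun u => deriv C u - deriv C 0) ht ?_ ?_
    · intro u _
      have h := (hd1 hC u).sub ((hasDerivAt_id u).smul_const (deriv C 0))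
      simp only [one_smul] at h; exact h
    · intro u hu
      calc ‖_‖ ≤ K * u := taylor1 hC hK2 hu.1
        _ ≤ K * t := mul_le_mul_of_nonneg_left hu.2 hK0
  have e : (C t - t • deriv C 0) - (C 0 - (0:ℝ) • deriv C 0)
      = C t - C 0 - t • deriv C 0 := by rw [zero_smul]; abel
  rw [e] at key
  calc _ ≤ (K*t)*t := key
    _ = K * t^2 := by ring

end mvt

lemma orth {C : ℝ → E3} (hunit : ∀ s : ℝ, ‖deriv C s‖ = 1)
    (hd2' : ∀ u : ℝ, HasDerivAt (deriv C) (iteratedDeriv 2 C u) u) :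
    (inner ℝ (deriv C 0) (iteratedDeriv 2 C 0) : ℝ) = 0 := by
  have h1 : HasDerivAt (fun u => (inner ℝ (deriv C u) (deriv C u) : ℝ))
      ((inner ℝ (deriv C 0) (iteratedDeriv 2 C 0) : ℝ) + inner ℝ (iteratedDeriv 2 C 0) (deriv C 0)) 0 :=
    (hd2' 0).inner ℝ (hd2' 0)
  have h2 : (fun u => (inner ℝ (deriv C u) (deriv C u) : ℝ)) = fun _ => 1 := by
    funext u
    rw [real_inner_self_eq_norm_sq, hunit u, one_pow]
  rw [h2] at h1
  have h3 := h1.unique (hasDerivAt_const 0 1)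
  rw [real_inner_comm (iteratedDeriv 2 C 0) (deriv C 0)] at h3
  rw [show (inner ℝ (deriv C 0) (iteratedDeriv 2 C 0) : ℝ)
    = inner ℝ (iteratedDeriv 2 C 0) (deriv C 0) from real_inner_comm _ _]
  linarith

end RibbonAux

open RibbonAux Set in
theorem ribbon_region_area_bound (K T B : ℝ) (hK : 0 < K) (hT : 0 < T) (hB : 0 < B) :
    ∃ β : ℝ, ∀ (C : ℝ → EuclideanSpace ℝ (Fin 3)) (x s₁ : ℝ),
      ContDiff ℝ 4 C → C 0 = 0 →
      (∀ s : ℝ, ‖deriv C s‖ = 1) →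
      (∀ s : ℝ, ‖iteratedDeriv 2 C s‖ ≤ K) →
      (∀ s : ℝ, ‖iteratedDeriv 3 C s‖ ≤ T) →
      (∀ s : ℝ, ‖iteratedDeriv 4 C s‖ ≤ B) →
      0 < x → K * x ≤ 2 / 5 → 0 < s₁ → s₁ ≤ 1.01 * x →
      cross3 (deriv C 0) (deriv C s₁) ≠ 0 →
      |∫ t in (0:ℝ)..s₁,
          dot3 (cross3 (deriv C t) (‖C s₁‖⁻¹ • C s₁)) (iteratedDeriv 2 C t) /
            (1 + dot3 (deriv C t) (‖C s₁‖⁻¹ • C s₁))| ≤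
        K * T * x ^ 3 + β * x ^ 4 := by
  -- the constant
  set Q' : ℝ := K^2/4 + T/3 + (1/K)*(K*T)/6 + (1/K)^2*T^2/36 with hQ'def
  set β₃ : ℝ := 2*(B*(1/K)+Q')*(K*T/3)*(1/K)
      + 2*(1+K*(1/K)+T*(1/K)^2/2)*(K/2+(T/2)*(1/K))*B
      + 2*B*(1+K*(1/K)/2+T*(1/K)^2/6)*K + 2*B*K with hβ₃def
  clear_value Q' β₃
  have hQ'0 : (0:ℝ) ≤ Q' := by rw [hQ'def]; positivity
  have h2BQ' : (0:ℝ) ≤ 2*(B*(1/K)+Q')*(K*T/3) := by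
    have h6 : (0:ℝ) ≤ B*(1/K) := by positivity
    have h7 : (0:ℝ) ≤ B*(1/K)+Q' := by linarith only [h6, hQ'0]
    positivity
  refine ⟨2*β₃, ?_⟩
  intro C x s₁ hC hC0 hunit hK2 hT3' hB4 hx hKx hs1 hsx _hcr
  have hβ₃0 : 0 ≤ β₃ := by rw [hβ₃def, hQ'def]; positivity
  -- basic constants
  set t₀ : E3 := deriv C 0 with ht₀def
  set a : E3 := iteratedDeriv 2 C 0 with hadef
  set c : E3 := iteratedDeriv 3 C 0 with hcdef
  clear_value t₀ a c
  have ht₀ : ‖t₀‖ = 1 := by rw [ht₀def]; exact hunit 0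
  have ha : ‖a‖ ≤ K := by rw [hadef]; exact hK2 0
  have hc : ‖c‖ ≤ T := by rw [hcdef]; exact hT3' 0
  have hKs : K * s₁ ≤ 0.404 := by
    have h := mul_le_mul_of_nonneg_left hsx hK.le
    linarith only [h, hKx]
  have hsK1 : s₁ ≤ 1/K := by rw [le_div_iff₀ hK]; linarith only [hKs]
  -- geometry of the chord
  set p : E3 := ‖C s₁‖⁻¹ • C s₁ with hpdef
  set r : ℝ := ‖C s₁‖ with hrdef
  set p₂ : E3 := t₀ + (s₁/2) • a + (s₁^2/6) • c with hp₂def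
  set v : E3 := s₁ • t₀ + (s₁^2/2) • a + (s₁^3/6) • c with hvdef
  set R : E3 := C s₁ - v with hRdef
  clear_value p r p₂ v R
  have hvp₂ : v = s₁ • p₂ := by rw [hvdef, hp₂def]; module
  have hR : ‖R‖ ≤ B * s₁^4 := by
    rw [hRdef, hvdef, ht₀def, hadef, hcdef]
    have := taylor5 hC hB4 hC0 hs1.le (t := s₁)
    convert this using 3 <;> ring
  have hCs0 : ‖C s₁ - s₁ • t₀‖ ≤ K * s₁^2 := by
    rw [ht₀def]
    have := taylor6 hC hK2 hs1.le (t := s₁)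
    rwa [hC0, sub_zero] at this
  have hst₀ : ‖s₁ • t₀‖ = s₁ := by
    rw [norm_smul, ht₀, Real.norm_eq_abs, abs_of_pos hs1, mul_one]
  have hrs1 : |s₁ - r| ≤ K * s₁^2 := by
    have := abs_norm_sub_norm_le (s₁ • t₀) (C s₁)
    rw [hst₀, norm_sub_rev, ← hrdef] at this
    exact this.trans hCs0
  have hr_low : s₁/2 ≤ r := by
    have h1 := abs_le.1 hrs1
    have h2 : K*s₁*s₁ ≤ 0.404*s₁ := mul_le_mul_of_nonneg_right hKs hs1.le
    linarith only [h1.2, h2, hs1.le]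
  have hr0 : (0:ℝ) < r := lt_of_lt_of_le (by positivity) hr_low
  have hp_unit : ‖p‖ = 1 := by
    rw [hpdef, norm_smul, Real.norm_eq_abs, abs_of_pos (inv_pos.2 hr0), ← hrdef,
      inv_mul_cancel₀ hr0.ne']
  -- orthogonality
  have hoa : (inner ℝ t₀ a : ℝ) = 0 := by
    rw [ht₀def, hadef]; exact orth hunit (fun u => hd2 hC u)
  -- norm of v
  have hdot3 : ∀ x y : E3, dot3 x y = (inner ℝ x y : ℝ) := fun _ _ => rfl
  have hoa' : dot3 t₀ a = 0 := by rw [hdot3]; exact hoa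
  have ht₀sq : t₀ 0^2 + t₀ 1^2 + t₀ 2^2 = 1 := by
    rw [← norm_sq_eq, ht₀]; norm_num
  have hv2 : ‖v‖^2 = s₁^2 + ((s₁^2/2)^2*‖a‖^2 + (s₁^3/6)^2*‖c‖^2
      + (s₁^4/3)*(dot3 t₀ c) + (s₁^5/6)*(dot3 a c)) := by
    rw [hvdef]
    simp only [norm_sq_eq, dot3_eq, PiLp.add_apply, PiLp.smul_apply, smul_eq_mul]
    rw [dot3_eq] at hoa'
    linear_combination s₁^3 * hoa' + s₁^2 * ht₀sq
  set Q : ℝ := K^2/4 + T/3 + s₁*(K*T)/6 + s₁^2*T^2/36 with hQdef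
  clear_value Q
  have hQ0 : 0 ≤ Q := by rw [hQdef]; positivity
  have hBQ : (0:ℝ) ≤ B*s₁ + Q := by
    have h9 := mul_nonneg hB.le hs1.le
    linarith only [h9, hQ0]
  have hQQ' : Q ≤ Q' := by
    rw [hQdef, hQ'def]
    gcongr <;> first
      | exact hsK1
      | exact pow_le_pow_left₀ hs1.le hsK1 2
      | positivity
  have hv2d : |‖v‖^2 - s₁^2| ≤ s₁^4 * Q := by
    have hi1 : |dot3 t₀ c| ≤ T := by
      rw [hdot3]
      have := abs_real_inner_le_norm t₀ c
      rw [ht₀, one_mul] at this; exact this.trans hc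
    have hi2 : |dot3 a c| ≤ K*T := by
      rw [hdot3]
      exact (abs_real_inner_le_norm a c).trans
        (mul_le_mul ha hc (norm_nonneg c) hK.le)
    have hi1' := abs_le.1 hi1
    have hi2' := abs_le.1 hi2
    have haK : ‖a‖^2 ≤ K^2 := pow_le_pow_left₀ (norm_nonneg a) ha 2
    have hcT : ‖c‖^2 ≤ T^2 := pow_le_pow_left₀ (norm_nonneg c) hc 2
    have e1 : (s₁^2/2)^2*‖a‖^2 ≤ s₁^4/4*K^2 := by
      have := mul_le_mul_of_nonneg_left haK (by positivity : (0:ℝ) ≤ s₁^4/4)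
      calc (s₁^2/2)^2*‖a‖^2 = s₁^4/4*‖a‖^2 := by ring
        _ ≤ s₁^4/4*K^2 := this
    have e1' : (0:ℝ) ≤ (s₁^2/2)^2*‖a‖^2 := by positivity
    have e2 : (s₁^3/6)^2*‖c‖^2 ≤ s₁^6/36*T^2 := by
      have := mul_le_mul_of_nonneg_left hcT (by positivity : (0:ℝ) ≤ s₁^6/36)
      calc (s₁^3/6)^2*‖c‖^2 = s₁^6/36*‖c‖^2 := by ring
        _ ≤ s₁^6/36*T^2 := this
    have e2' : (0:ℝ) ≤ (s₁^3/6)^2*‖c‖^2 := by positivity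
    have e3a := mul_le_mul_of_nonneg_left hi1'.2 (by positivity : (0:ℝ) ≤ s₁^4/3)
    have e3b := mul_le_mul_of_nonneg_left hi1'.1 (by positivity : (0:ℝ) ≤ s₁^4/3)
    have e4a := mul_le_mul_of_nonneg_left hi2'.2 (by positivity : (0:ℝ) ≤ s₁^5/6)
    have e4b := mul_le_mul_of_nonneg_left hi2'.1 (by positivity : (0:ℝ) ≤ s₁^5/6)
    rw [hv2, hQdef, abs_le]
    constructor <;> linarith [e1, e1', e2, e2', e3a, e3b, e4a, e4b]
  have hvs : |‖v‖ - s₁| ≤ s₁^3 * Q := by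
    have hmul : |‖v‖ - s₁| * (‖v‖ + s₁) = |‖v‖^2 - s₁^2| := by
      rw [← abs_of_nonneg (by positivity : (0:ℝ) ≤ ‖v‖ + s₁), ← abs_mul]
      congr 1; ring
    have h1 : |‖v‖ - s₁| * s₁ ≤ |‖v‖ - s₁| * (‖v‖ + s₁) :=
      mul_le_mul_of_nonneg_left
        (by linarith only [norm_nonneg v] : s₁ ≤ ‖v‖ + s₁) (abs_nonneg _)
    have h2 : |‖v‖ - s₁| * s₁ ≤ s₁^4 * Q := (h1.trans_eq hmul).trans hv2d
    refine le_of_mul_le_mul_right ?_ hs1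
    calc |‖v‖ - s₁| * s₁ ≤ s₁^4 * Q := h2
      _ = s₁^3 * Q * s₁ := by ring
  have hrv : |r - ‖v‖| ≤ B * s₁^4 := by
    have := abs_norm_sub_norm_le (C s₁) v
    rw [← hrdef, ← hRdef] at this
    exact this.trans hR
  have hrs : |r - s₁| ≤ B*s₁^4 + s₁^3*Q := by
    have h3 := abs_sub_le r ‖v‖ s₁
    linarith only [h3, hrv, hvs]
  -- lambda
  set lam : ℝ := r⁻¹ * s₁ with hlamdef
  clear_value lam
  have hlam0 : 0 ≤ lam := by rw [hlamdef]; positivity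
  have hlam_le : lam ≤ 2 := by
    rw [hlamdef, inv_mul_eq_div, div_le_iff₀ hr0]; linarith only [hr_low]
  have hlam1 : |lam - 1| ≤ 2*s₁^2*(B*s₁ + Q) := by
    have h : lam - 1 = (s₁ - r)/r := by rw [hlamdef]; field_simp
    rw [h, abs_div, abs_of_pos hr0, div_le_iff₀ hr0]
    have h2 : |s₁ - r| = |r - s₁| := abs_sub_comm s₁ r
    rw [h2]
    linarith only [hrs, mul_nonneg (mul_nonneg (by positivity : (0:ℝ) ≤ 2*s₁^2)
      hBQ) (by linarith only [hr_low] : (0:ℝ) ≤ r - s₁/2)]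
  have hp_eq : p = lam • p₂ + r⁻¹ • R := by
    have hCsv : C s₁ = s₁ • p₂ + R := by rw [hRdef, hvp₂]; abel
    rw [hpdef, hCsv, smul_add, smul_smul, ← hlamdef]
  have hrinv : r⁻¹ ≤ 2/s₁ := by
    rw [inv_eq_one_div, div_le_div_iff₀ hr0 hs1]; linarith only [hr_low]
  -- p close to t₀
  have hpt₀ : ‖p - t₀‖ ≤ 2*(K*s₁) := by
    have e : p - t₀ = (r⁻¹ - s₁⁻¹) • C s₁ + s₁⁻¹ • (C s₁ - s₁ • t₀) := by
      rw [hpdef, smul_sub, sub_smul, smul_smul, inv_mul_cancel₀ hs1.ne', one_smul]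
      abel
    rw [e]
    have h1 : ‖(r⁻¹ - s₁⁻¹) • C s₁‖ ≤ K*s₁ := by
      rw [norm_smul, Real.norm_eq_abs, ← hrdef]
      have e2 : r⁻¹ - s₁⁻¹ = (s₁ - r)/(r*s₁) := by field_simp
      rw [e2, abs_div, abs_of_pos (by positivity : (0:ℝ) < r*s₁), div_mul_eq_mul_div,
        div_le_iff₀ (by positivity : (0:ℝ) < r*s₁)]
      calc |s₁ - r| * r ≤ (K*s₁^2) * r := by
            exact mul_le_mul_of_nonneg_right hrs1 hr0.le
        _ ≤ K*s₁*(r*s₁) := le_of_eq (by ring)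
    have h2 : ‖s₁⁻¹ • (C s₁ - s₁ • t₀)‖ ≤ K*s₁ := by
      rw [norm_smul, Real.norm_eq_abs, abs_of_pos (by positivity : (0:ℝ) < s₁⁻¹)]
      calc s₁⁻¹ * ‖C s₁ - s₁ • t₀‖ ≤ s₁⁻¹ * (K*s₁^2) :=
            mul_le_mul_of_nonneg_left hCs0 (by positivity)
        _ = K*s₁ := by field_simp
    calc ‖_ + _‖ ≤ ‖(r⁻¹ - s₁⁻¹) • C s₁‖ + ‖s₁⁻¹ • (C s₁ - s₁ • t₀)‖ := norm_add_le _ _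
      _ ≤ K*s₁ + K*s₁ := add_le_add h1 h2
      _ = 2*(K*s₁) := by ring
  -- pointwise bound setup
  set D : ℝ := D3 t₀ a c with hDdef
  clear_value D
  have hD : |D| ≤ K*T := by
    rw [hDdef]
    have := D3_le t₀ a c
    rw [ht₀, one_mul] at this
    exact (this.trans (mul_le_mul ha hc (norm_nonneg c) hK.le))
  set M : ℝ := K*T/6*s₁^2 + s₁^3*(2*(B*s₁+Q)*(K*T/3)*s₁
      + 2*(1+K*s₁+T*s₁^2/2)*(K/2+(T/2)*s₁)*B
      + 2*B*(1+K*s₁/2+T*s₁^2/6)*K + 2*B*K) with hMdef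
  clear_value M
  -- pointwise bound
  have key : ∀ t ∈ Ioc (0:ℝ) s₁,
      |dot3 (cross3 (deriv C t) p) (iteratedDeriv 2 C t) /
        (1 + dot3 (deriv C t) p)| ≤ M := by
    intro t ht
    obtain ⟨ht0, hts⟩ := ht
    set u : E3 := deriv C t with hudef
    set w : E3 := iteratedDeriv 2 C t with hwdef
    set u₂ : E3 := t₀ + t • a + (t^2/2) • c with hu₂def
    set w₂ : E3 := a + t • c with hw₂def
    clear_value u w u₂ w₂
    have hu1 : ‖u‖ = 1 := by rw [hudef]; exact hunit t
    have hwK : ‖w‖ ≤ K := by rw [hwdef]; exact hK2 t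
    have hut₀ : ‖u - t₀‖ ≤ K*t := by
      rw [hudef, ht₀def]; exact taylor1 hC hK2 ht0.le
    have huu₂ : ‖u - u₂‖ ≤ B*t^3 := by
      rw [hudef, hu₂def, ht₀def, hadef, hcdef]
      exact taylor4 hC hB4 ht0.le
    have hww₂ : ‖w - w₂‖ ≤ B*t^2 := by
      rw [hwdef, hw₂def, hadef, hcdef]
      exact taylor3 hC hB4 ht0.le
    have hu₂n : ‖u₂‖ ≤ 1 + K*t + T*(t^2/2) := by
      have n1 : ‖t • a‖ ≤ t*K := by
        rw [norm_smul, Real.norm_eq_abs, abs_of_pos ht0]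
        exact mul_le_mul_of_nonneg_left ha ht0.le
      have n2 : ‖(t^2/2) • c‖ ≤ (t^2/2)*T := by
        rw [norm_smul, Real.norm_eq_abs, abs_of_nonneg (by positivity : (0:ℝ) ≤ t^2/2)]
        exact mul_le_mul_of_nonneg_left hc (by positivity)
      calc ‖u₂‖ = ‖t₀ + t • a + (t^2/2) • c‖ := by rw [hu₂def]
        _ ≤ ‖t₀ + t • a‖ + ‖(t^2/2) • c‖ := norm_add_le _ _
        _ ≤ (‖t₀‖ + ‖t • a‖) + ‖(t^2/2) • c‖ := by
            exact add_le_add_left (norm_add_le _ _) _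
        _ ≤ (1 + t*K) + (t^2/2)*T := by
            rw [ht₀]; exact add_le_add (add_le_add_right n1 1) n2
        _ = 1 + K*t + T*(t^2/2) := by ring
    have hp₂n : ‖p₂‖ ≤ 1 + K*(s₁/2) + T*(s₁^2/6) := by
      have n1 : ‖(s₁/2) • a‖ ≤ (s₁/2)*K := by
        rw [norm_smul, Real.norm_eq_abs, abs_of_pos (by positivity : (0:ℝ) < s₁/2)]
        exact mul_le_mul_of_nonneg_left ha (by positivity)
      have n2 : ‖(s₁^2/6) • c‖ ≤ (s₁^2/6)*T := by
        rw [norm_smul, Real.norm_eq_abs, abs_of_pos (by positivity : (0:ℝ) < s₁^2/6)]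
        exact mul_le_mul_of_nonneg_left hc (by positivity)
      calc ‖p₂‖ = ‖t₀ + (s₁/2) • a + (s₁^2/6) • c‖ := by rw [hp₂def]
        _ ≤ ‖t₀ + (s₁/2) • a‖ + ‖(s₁^2/6) • c‖ := norm_add_le _ _
        _ ≤ (‖t₀‖ + ‖(s₁/2) • a‖) + ‖(s₁^2/6) • c‖ := by
            exact add_le_add_left (norm_add_le _ _) _
        _ ≤ (1 + (s₁/2)*K) + (s₁^2/6)*T := by
            rw [ht₀]; exact add_le_add (add_le_add_right n1 1) n2
        _ = 1 + K*(s₁/2) + T*(s₁^2/6) := by ring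
    have hp₂u₂ : ‖p₂ - u₂‖ ≤ (s₁/2)*K + (s₁^2/2)*T := by
      have e : p₂ - u₂ = (s₁/2 - t) • a + (s₁^2/6 - t^2/2) • c := by
        rw [hp₂def, hu₂def]; module
      have h1 : |s₁/2 - t| ≤ s₁/2 := abs_le.2 ⟨by linarith only [hts], by linarith only [ht0]⟩
      have h2 : |s₁^2/6 - t^2/2| ≤ s₁^2/2 := by
        have ht2' : t^2 ≤ s₁^2 := pow_le_pow_left₀ ht0.le hts 2
        exact abs_le.2 ⟨by linarith only [ht2', sq_nonneg s₁],
          by linarith only [ht2', sq_nonneg t, sq_nonneg s₁]⟩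
      have n1 : ‖(s₁/2 - t) • a‖ ≤ (s₁/2)*K := by
        rw [norm_smul, Real.norm_eq_abs]
        exact mul_le_mul h1 ha (norm_nonneg a) (by positivity)
      have n2 : ‖(s₁^2/6 - t^2/2) • c‖ ≤ (s₁^2/2)*T := by
        rw [norm_smul, Real.norm_eq_abs]
        exact mul_le_mul h2 hc (norm_nonneg c) (by positivity)
      calc ‖p₂ - u₂‖ = ‖(s₁/2 - t) • a + (s₁^2/6 - t^2/2) • c‖ := by rw [e]
        _ ≤ ‖(s₁/2 - t) • a‖ + ‖(s₁^2/6 - t^2/2) • c‖ := norm_add_le _ _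
        _ ≤ (s₁/2)*K + (s₁^2/2)*T := add_le_add n1 n2
    -- denominator is at least 1
    have hupnorm : ‖u - p‖ ≤ 3*(K*s₁) := by
      calc ‖u - p‖ ≤ ‖u - t₀‖ + ‖t₀ - p‖ := norm_sub_le_norm_sub_add_norm_sub u t₀ p
        _ ≤ K*t + 2*(K*s₁) := by
            rw [norm_sub_rev t₀ p]; exact add_le_add hut₀ hpt₀
        _ ≤ 3*(K*s₁) := by
            have h5 := mul_le_mul_of_nonneg_left hts hK.le
            linarith only [h5, hut₀, hpt₀]
    have hinner_up : (0:ℝ) ≤ inner ℝ u p := by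
      have hns := norm_sub_sq_real u p
      rw [hu1, hp_unit] at hns
      have h2 : ‖u - p‖^2 ≤ (3*(K*s₁))^2 :=
        pow_le_pow_left₀ (norm_nonneg _) hupnorm 2
      have h3 : (K*s₁)^2 ≤ 0.404^2 :=
        pow_le_pow_left₀ (by positivity) hKs 2
      nlinarith only [h2, h3, hns]
    have hden : (1:ℝ) ≤ 1 + dot3 u p := by
      rw [hdot3]; linarith only [hinner_up]
    -- numerator decomposition
    have hN : dot3 (cross3 u p) w
        = ((s₁/2)*t - s₁^2/6 - t*t + t^2/2)*D + (lam - 1)*(((s₁/2)*t - s₁^2/6 - t*t + t^2/2)*D)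
          + lam*(D3 u₂ (p₂ - u₂) (w - w₂)) + lam*(D3 (u - u₂) p₂ w)
          + r⁻¹*(D3 u R w) := by
      have h1 : dot3 (cross3 u p) w = D3 u p w := rfl
      rw [h1, hp_eq, D3_smul₂, D3_decomp u u₂ p₂ w w₂]
      have h2 : D3 u₂ p₂ w₂ = ((s₁/2)*t - s₁^2/6 - t*t + t^2/2) * D := by
        rw [hu₂def, hp₂def, hw₂def, hDdef]
        exact D3_main t₀ a c t (t^2/2) (s₁/2) (s₁^2/6) t
      rw [h2]; ring
    -- bound the numerator
    have hff : |(s₁/2)*t - s₁^2/6 - t*t + t^2/2| ≤ s₁^2/6 := by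
      refine abs_le.2 ⟨?_, ?_⟩
      · nlinarith only [mul_nonneg ht0.le (sub_nonneg.2 hts)]
      · nlinarith only [sq_nonneg (t - s₁/2), hts, ht0]
    have hffD : |((s₁/2)*t - s₁^2/6 - t*t + t^2/2)*D| ≤ s₁^2/6*(K*T) := by
      rw [abs_mul]
      exact mul_le_mul hff hD (abs_nonneg D) (by positivity)
    have hb1 : |(lam - 1)*(((s₁/2)*t - s₁^2/6 - t*t + t^2/2)*D)|
        ≤ (2*s₁^2*(B*s₁+Q))*(s₁^2/6*(K*T)) := by
      rw [abs_mul]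
      exact mul_le_mul hlam1 hffD (abs_nonneg _) (by positivity)
    have hb2 : |lam*(D3 u₂ (p₂ - u₂) (w - w₂))|
        ≤ 2*((1 + K*s₁ + T*(s₁^2/2))*((s₁/2)*K + (s₁^2/2)*T)*(B*t^2)) := by
      rw [abs_mul, abs_of_nonneg hlam0]
      have hu₂n' : ‖u₂‖ ≤ 1 + K*s₁ + T*(s₁^2/2) := by
        refine hu₂n.trans ?_
        have m1 := mul_le_mul_of_nonneg_left hts hK.le
        have m2 := mul_le_mul_of_nonneg_left (pow_le_pow_left₀ ht0.le hts 2) hT.le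
        linarith only [m1, m2]
      have hX : ‖u₂‖*‖p₂ - u₂‖*‖w - w₂‖
          ≤ (1 + K*s₁ + T*(s₁^2/2))*((s₁/2)*K + (s₁^2/2)*T)*(B*t^2) := by
        have hpos1 : (0:ℝ) ≤ 1 + K*s₁ + T*(s₁^2/2) := by positivity
        have hpos2 : (0:ℝ) ≤ (s₁/2)*K + (s₁^2/2)*T := by positivity
        exact mul_le_mul (mul_le_mul hu₂n' hp₂u₂ (norm_nonneg _) hpos1) hww₂
          (norm_nonneg _) (by positivity)
      exact mul_le_mul hlam_le ((D3_le _ _ _).trans hX) (abs_nonneg _) (by norm_num)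
    have hb3 : |lam*(D3 (u - u₂) p₂ w)|
        ≤ 2*((B*t^3)*(1 + K*(s₁/2) + T*(s₁^2/6))*K) := by
      rw [abs_mul, abs_of_nonneg hlam0]
      have hX : ‖u - u₂‖*‖p₂‖*‖w‖ ≤ (B*t^3)*(1 + K*(s₁/2) + T*(s₁^2/6))*K := by
        have hpos1 : (0:ℝ) ≤ B*t^3 := by positivity
        exact mul_le_mul (mul_le_mul huu₂ hp₂n (norm_nonneg _) hpos1) hwK
          (norm_nonneg _) (by positivity)
      exact mul_le_mul hlam_le ((D3_le _ _ _).trans hX) (abs_nonneg _) (by norm_num)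
    have hb4 : |r⁻¹*(D3 u R w)| ≤ (2/s₁)*((B*s₁^4)*K) := by
      rw [abs_mul, abs_of_nonneg (by positivity : (0:ℝ) ≤ r⁻¹)]
      refine mul_le_mul hrinv ((D3_le _ _ _).trans ?_) (abs_nonneg _) (by positivity)
      rw [hu1, one_mul]
      exact mul_le_mul hR hwK (norm_nonneg w) (by positivity)
    have hnum : |dot3 (cross3 u p) w| ≤ M := by
      rw [hN]
      have tri : |((s₁/2)*t - s₁^2/6 - t*t + t^2/2)*D
          + (lam - 1)*(((s₁/2)*t - s₁^2/6 - t*t + t^2/2)*D)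
          + lam*(D3 u₂ (p₂ - u₂) (w - w₂)) + lam*(D3 (u - u₂) p₂ w)
          + r⁻¹*(D3 u R w)|
          ≤ |((s₁/2)*t - s₁^2/6 - t*t + t^2/2)*D|
          + |(lam - 1)*(((s₁/2)*t - s₁^2/6 - t*t + t^2/2)*D)|
          + |lam*(D3 u₂ (p₂ - u₂) (w - w₂))| + |lam*(D3 (u - u₂) p₂ w)|
          + |r⁻¹*(D3 u R w)| := by
        exact (abs_add_le _ _).trans (by
          gcongr
          exact (abs_add_le _ _).trans (by
            gcongr
            exact (abs_add_le _ _).trans (by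
              gcongr
              exact abs_add_le _ _)))
      refine tri.trans ?_
      rw [hMdef]
      have ht3 : t^3 ≤ s₁^3 := pow_le_pow_left₀ ht0.le hts 3
      have ht2 : t^2 ≤ s₁^2 := pow_le_pow_left₀ ht0.le hts 2
      have c1 : s₁^2/6*(K*T) = K*T/6*s₁^2 := by ring
      have c2 : (2*s₁^2*(B*s₁+Q))*(s₁^2/6*(K*T)) ≤ s₁^3*(2*(B*s₁+Q)*(K*T/3)*s₁) := by
        have base : (0:ℝ) ≤ s₁^4*((B*s₁+Q)*(K*T)) :=
          mul_nonneg (by positivity) (mul_nonneg hBQ (by positivity))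
        linarith only [base]
      have c3 : 2*((1 + K*s₁ + T*(s₁^2/2))*((s₁/2)*K + (s₁^2/2)*T)*(B*t^2))
          ≤ s₁^3*(2*(1+K*s₁+T*s₁^2/2)*(K/2+(T/2)*s₁)*B) := by
        have pos : (0:ℝ) ≤ 2*((1 + K*s₁ + T*(s₁^2/2))*((s₁/2)*K + (s₁^2/2)*T)*B) := by
          positivity
        have h := mul_le_mul_of_nonneg_left ht2 pos
        linarith only [h]
      have c4 : 2*((B*t^3)*(1 + K*(s₁/2) + T*(s₁^2/6))*K)
          ≤ s₁^3*(2*B*(1+K*s₁/2+T*s₁^2/6)*K) := by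
        have pos : (0:ℝ) ≤ 2*B*(1 + K*(s₁/2) + T*(s₁^2/6))*K := by positivity
        have h := mul_le_mul_of_nonneg_left ht3 pos
        linarith only [h]
      have c5 : (2/s₁)*((B*s₁^4)*K) = s₁^3*(2*B*K) := by
        field_simp
      linarith only [hffD, hb1, hb2, hb3, hb4, c1, c2, c3, c4, c5]
    -- combine with denominator
    calc |dot3 (cross3 u p) w / (1 + dot3 u p)|
        = |dot3 (cross3 u p) w| / (1 + dot3 u p) := by
          rw [abs_div, abs_of_pos (by linarith : (0:ℝ) < 1 + dot3 u p)]
      _ ≤ |dot3 (cross3 u p) w| := div_le_self (abs_nonneg _) hden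
      _ ≤ M := hnum
  -- integrate
  have hM0 : 0 ≤ M := by
    have := key s₁ ⟨hs1, le_refl s₁⟩
    exact (abs_nonneg _).trans this
  have hIb : |∫ t in (0:ℝ)..s₁,
      dot3 (cross3 (deriv C t) p) (iteratedDeriv 2 C t) / (1 + dot3 (deriv C t) p)|
      ≤ M * |s₁ - 0| := by
    rw [← Real.norm_eq_abs]
    apply intervalIntegral.norm_integral_le_of_norm_le_const
    intro t ht'
    rw [uIoc_of_le hs1.le] at ht'
    rw [Real.norm_eq_abs]
    exact key t ht'
  have habs0 : |s₁ - (0:ℝ)| = s₁ := by rw [sub_zero, abs_of_pos hs1]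
  rw [habs0] at hIb
  -- final arithmetic
  have hfin : M * s₁ ≤ K*T*x^3 + 2*β₃*x^4 := by
    have hs3 : s₁^3 ≤ (1.01*x)^3 := pow_le_pow_left₀ hs1.le hsx 3
    have hs4 : s₁^4 ≤ (1.01*x)^4 := pow_le_pow_left₀ hs1.le hsx 4
    have hβs : (2*(B*s₁+Q)*(K*T/3)*s₁ + 2*(1+K*s₁+T*s₁^2/2)*(K/2+(T/2)*s₁)*B
        + 2*B*(1+K*s₁/2+T*s₁^2/6)*K + 2*B*K) ≤ β₃ := by
      rw [hβ₃def]
      have hs2K : s₁^2 ≤ (1/K)^2 := pow_le_pow_left₀ hs1.le hsK1 2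
      gcongr <;> first
        | exact hQQ'
        | exact hsK1
        | exact hs2K
        | exact hQ0
        | exact hBQ
        | exact h2BQ'
        | positivity
    have h1 : K*T/6*s₁^2*s₁ ≤ K*T*x^3 := by
      have hm := mul_le_mul_of_nonneg_left hs3 (by positivity : (0:ℝ) ≤ K*T/6)
      have hx3 : (0:ℝ) ≤ K*T*x^3 := by positivity
      linarith only [hm, hx3]
    have h2 : s₁^3*(2*(B*s₁+Q)*(K*T/3)*s₁ + 2*(1+K*s₁+T*s₁^2/2)*(K/2+(T/2)*s₁)*B
        + 2*B*(1+K*s₁/2+T*s₁^2/6)*K + 2*B*K)*s₁ ≤ 2*β₃*x^4 := by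
      calc s₁^3*(2*(B*s₁+Q)*(K*T/3)*s₁ + 2*(1+K*s₁+T*s₁^2/2)*(K/2+(T/2)*s₁)*B
            + 2*B*(1+K*s₁/2+T*s₁^2/6)*K + 2*B*K)*s₁
          = s₁^4*(2*(B*s₁+Q)*(K*T/3)*s₁ + 2*(1+K*s₁+T*s₁^2/2)*(K/2+(T/2)*s₁)*B
            + 2*B*(1+K*s₁/2+T*s₁^2/6)*K + 2*B*K) := by ring
        _ ≤ s₁^4*β₃ := mul_le_mul_of_nonneg_left hβs (by positivity)
        _ ≤ (1.01*x)^4*β₃ := mul_le_mul_of_nonneg_right hs4 hβ₃0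
        _ ≤ 2*β₃*x^4 := by
            have h6 := mul_nonneg hβ₃0 (pow_pos hx 4).le
            linarith only [h6]
    calc M * s₁ = K*T/6*s₁^2*s₁ + s₁^3*(2*(B*s₁+Q)*(K*T/3)*s₁
        + 2*(1+K*s₁+T*s₁^2/2)*(K/2+(T/2)*s₁)*B
        + 2*B*(1+K*s₁/2+T*s₁^2/6)*K + 2*B*K)*s₁ := by rw [hMdef]; ring
      _ ≤ K*T*x^3 + 2*β₃*x^4 := add_le_add h1 h2
  exact hIb.trans hfin

end
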